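/- The right S-act S is strongly co-Hopfian if and only if for every s ∈ S there exist n ∈ N and t ∈ S such that s^n = s^{n+1} t. -/
import Mathlib


structure RAct (S : Type*) [Monoid S] (A : Type*) where
  act : A → S → A
  act_one : ∀ a, act a 1 = a
  act_mul : ∀ a s t, act a (s * t) = act (act a s) t

section

lemma iter_mul {S : Type*} [Monoid S] (a : S) (f : S → S) (hf : ∀ x, f x = a * x) :
    ∀ (m : ℕ) (x : S), f^[m] x = a ^ m * x := by
  intro m
  induction m with
  | zero => intro x; simp
  | succ k ih =>
    intro x
    rw [Function.iterate_succ_apply, hf, ih, ← mul_assoc, ← pow_succ]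

lemma pow_stab {S : Type*} [Monoid S] (a t : S) (n : ℕ) (h : a ^ n = a ^ (n + 1) * t) :
    ∀ k : ℕ, a ^ n = a ^ (n + k) * t ^ k := by
  intro k
  induction k with
  | zero => simp
  | succ k ih =>
    have h1 : a ^ (n + k) = a ^ (n + k + 1) * t := by
      have : a ^ (n + k) = a ^ k * a ^ n := by rw [← pow_add, add_comm]
      rw [this, h, ← mul_assoc, ← pow_add]
      ring_nf
    rw [ih, h1, mul_assoc, ← pow_succ']
    rw [← add_assoc]

end

variable {S : Type*} [Monoid S] {A B : Type*}

/-- `f` is an S-act homomorphism from `M` to `N`. -/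
def IsHom (M : RAct S A) (N : RAct S B) (f : A → B) : Prop :=
  ∀ a s, f (M.act a s) = N.act (f a) s

/-- `f` is an S-act endomorphism of `M`. -/
def IsEnd (M : RAct S A) (f : A → A) : Prop := IsHom M M f

/-- `r` is a congruence on the S-act `M`. -/
def IsCong (M : RAct S A) (r : A → A → Prop) : Prop :=
  Equivalence r ∧ ∀ a b s, r a b → r (M.act a s) (M.act b s)

/-- The kernel congruence `K_f`. -/
def kerC {A : Type*} (f : A → A) : A → A → Prop := fun a b => f a = f b

/-- The image congruence `I_f = (im f × im f) ∪ Δ`. -/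
def imC {A : Type*} (f : A → A) : A → A → Prop :=
  fun a b => a = b ∨ (a ∈ Set.range f ∧ b ∈ Set.range f)

/-- The diagonal relation. -/
def diagR (A : Type*) : A → A → Prop := fun a b => a = b

/-- The full relation. -/
def fullR (A : Type*) : A → A → Prop := fun _ _ => True

/-- `M` is strongly Hopfian: the chain `K_f ⊆ K_{f²} ⊆ ⋯` stabilizes for every endomorphism. -/
def StronglyHopfian (M : RAct S A) : Prop :=
  ∀ f : A → A, IsEnd M f → ∃ n : ℕ, 1 ≤ n ∧ ∀ m, n ≤ m → kerC (f^[m]) = kerC (f^[n])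

/-- `M` is strongly co-Hopfian: the chain `I_f ⊇ I_{f²} ⊇ ⋯` stabilizes for every endomorphism. -/
def StronglyCoHopfian (M : RAct S A) : Prop :=
  ∀ f : A → A, IsEnd M f → ∃ n : ℕ, 1 ≤ n ∧ ∀ m, n ≤ m → imC (f^[m]) = imC (f^[n])

/-- `M` is Hopfian: every surjective endomorphism is injective. -/
def Hopfian (M : RAct S A) : Prop :=
  ∀ f : A → A, IsEnd M f → Function.Surjective f → Function.Injective f

/-- `M` is co-Hopfian: every injective endomorphism is surjective. -/
def CoHopfian (M : RAct S A) : Prop :=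
  ∀ f : A → A, IsEnd M f → Function.Injective f → Function.Surjective f

/-- ACC on congruences. -/
def NoetherianAct (M : RAct S A) : Prop :=
  ∀ c : ℕ → (A → A → Prop), (∀ n, IsCong M (c n)) →
    (∀ n a b, c n a b → c (n + 1) a b) → ∃ N, ∀ m, N ≤ m → c m = c N

/-- DCC on congruences. -/
def ArtinianAct (M : RAct S A) : Prop :=
  ∀ c : ℕ → (A → A → Prop), (∀ n, IsCong M (c n)) →
    (∀ n a b, c (n + 1) a b → c n a b) → ∃ N, ∀ m, N ≤ m → c m = c N

/-- The monoid `S` as a right act over itself. -/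
def mulAct (S : Type*) [Monoid S] : RAct S S :=
  ⟨fun x s => x * s, mul_one, fun a s t => (mul_assoc a s t).symm⟩
theorem stmt12 : StronglyCoHopfian (mulAct S) ↔
    ∀ s : S, ∃ n : ℕ, 1 ≤ n ∧ ∃ t : S, s ^ n = s ^ (n + 1) * t := by
  constructor
  · intro H s
    set f : S → S := fun x => s * x with hfdef
    have hend : IsEnd (mulAct S) f := by
      intro a r; simp only [hfdef, mulAct, IsHom]; exact (mul_assoc s a r).symm
    obtain ⟨n, hn1, hn⟩ := H f hend
    have hit := iter_mul s f (fun x => rfl)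
    have h1 : imC (f^[n]) (s ^ n) (s ^ (n + 1)) := by
      right
      constructor
      · exact ⟨1, by rw [hit]; simp⟩
      · exact ⟨s, by rw [hit, ← pow_succ]⟩
    rw [← hn (n + 1) (Nat.le_succ n)] at h1
    rcases h1 with h1 | ⟨⟨y, hy⟩, _⟩
    · exact ⟨n, hn1, 1, by rw [mul_one, h1]⟩
    · rw [hit] at hy
      exact ⟨n, hn1, y, by rw [← hy]⟩
  · intro H f hend
    set a := f 1 with ha
    have hf : ∀ x, f x = a * x := by
      intro x
      have := hend 1 x
      simpa [mulAct] using this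
    obtain ⟨n, hn1, t, ht⟩ := H a
    refine ⟨n, hn1, fun m hm => ?_⟩
    have hit := iter_mul a f hf
    obtain ⟨k, rfl⟩ := Nat.exists_eq_add_of_le hm
    have hrange : Set.range (f^[n + k]) = Set.range (f^[n]) := by
      ext x
      constructor
      · rintro ⟨y, rfl⟩
        refine ⟨a ^ k * y, ?_⟩
        rw [hit, hit, ← mul_assoc, ← pow_add]
      · rintro ⟨y, rfl⟩
        refine ⟨t ^ k * y, ?_⟩
        rw [hit, hit, ← mul_assoc, ← pow_stab a t n ht k]
    funext x y
    apply propext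
    unfold imC
    rw [hrange]
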